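/- Let ζ, ζ₀ ∈ ℂ with |ζ| = |ζ₀| = 1, and let A = {w ∈ ℂ : 0 < |w| < 1 and (w + w⁻¹)/2 ∈ ζ₀·ℝ}, where ζ₀·ℝ = {t·ζ₀ : t ∈ ℝ}. Then the sets ζ·A = {ζ·w : w ∈ A} and A have nonempty intersection if and only if ζ = 1 or ζ = −1. -/

import Mathlib

/-- Let `|ζ| = |ζ₀| = 1` and let `A` be the set of `w` in the punctured open unit disc with
`(w + w⁻¹)/2 ∈ ζ₀·ℝ`. Then `ζ·A` meets `A` if and only if `ζ = ±1`. -/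
theorem stmt_5 (ζ ζ₀ : ℂ) (hζ : ‖ζ‖ = 1) (hζ₀ : ‖ζ₀‖ = 1) :
    let A : Set ℂ := {w : ℂ | (0 < ‖w‖ ∧ ‖w‖ < 1) ∧
      ∃ t : ℝ, (w + w⁻¹) / 2 = (t : ℂ) * ζ₀}
    ((fun w => ζ * w) '' A ∩ A).Nonempty ↔ ζ = 1 ∨ ζ = -1 := by
  intro A
  have hζ0 : ζ ≠ 0 := by
    intro h; rw [h] at hζ; simp at hζ
  have hζ₀0 : ζ₀ ≠ 0 := by
    intro h; rw [h] at hζ₀; simp at hζ₀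
  constructor
  · rintro ⟨x, ⟨w, ⟨⟨hw0, hw1⟩, t, ht⟩, rfl⟩, ⟨hx0, hx1⟩, s, hs⟩
    have hw : w ≠ 0 := by
      intro h; rw [h] at hw0; simp at hw0
    by_contra hne
    push_neg at hne
    obtain ⟨hne1, hne2⟩ := hne
    have hzi : ζ * ζ⁻¹ = 1 := mul_inv_cancel₀ hζ0
    have hd : ζ - ζ⁻¹ ≠ 0 := by
      intro h
      have h3 : (ζ - 1) * (ζ + 1) = 0 := by linear_combination ζ * h + hzi
      rcases mul_eq_zero.mp h3 with h' | h'
      · exact hne1 (sub_eq_zero.mp h')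
      · exact hne2 (eq_neg_of_add_eq_zero_left h')
    have h1 : w + w⁻¹ = 2 * t * ζ₀ := by linear_combination 2 * ht
    have h2 : ζ * w + ζ⁻¹ * w⁻¹ = 2 * s * ζ₀ := by
      simp only [mul_inv] at hs
      linear_combination 2 * hs
    have E1 : (ζ - ζ⁻¹) * w = 2 * ζ₀ * ((s : ℂ) - t * ζ⁻¹) := by
      linear_combination h2 - ζ⁻¹ * h1
    have E2 : (ζ - ζ⁻¹) * w⁻¹ = -(2 * ζ₀ * ((s : ℂ) - t * ζ)) := by
      linear_combination ζ * h1 - h2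
    have hconj : ζ⁻¹ = (starRingEnd ℂ) ζ := Complex.inv_eq_conj hζ
    have habs : ‖(s : ℂ) - t * ζ⁻¹‖ = ‖(s : ℂ) - t * ζ‖ := by
      rw [hconj]
      have : (s : ℂ) - t * (starRingEnd ℂ) ζ = (starRingEnd ℂ) ((s : ℂ) - t * ζ) := by
        simp [map_sub, map_mul]
      rw [this, Complex.norm_conj]
    have A1 := congrArg (‖·‖) E1
    have A2 := congrArg (‖·‖) E2
    simp only [norm_mul, norm_neg, habs, hζ₀] at A1 A2
    have hd' : ‖ζ - ζ⁻¹‖ ≠ 0 := norm_ne_zero_iff.mpr hd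
    have key : ‖w‖ = ‖w⁻¹‖ := mul_left_cancel₀ hd' (by rw [A1, A2])
    rw [norm_inv] at key
    have h1' : ‖w‖ * ‖w‖ = 1 := by
      field_simp [hw0.ne'] at key
      nlinarith [key]
    nlinarith [hw0, hw1]
  · intro h
    obtain ⟨z, hz⟩ := IsAlgClosed.exists_pow_nat_eq (4 * ζ₀ ^ 2 - 1 : ℂ) zero_lt_two
    obtain ⟨a, b, hab, hsum⟩ : ∃ a b : ℂ, a * b = 1 ∧ a + b = 4 * ζ₀ :=
      ⟨2 * ζ₀ + z, 2 * ζ₀ - z, by linear_combination -hz, by ring⟩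
    have ha0 : a ≠ 0 := by
      intro h'; rw [h'] at hab; simp at hab
    have hb0 : b ≠ 0 := by
      intro h'; rw [h'] at hab; simp at hab
    have habs : ‖a‖ * ‖b‖ = 1 := by
      rw [← norm_mul, hab]; simp
    have hsumabs : ‖a + b‖ = 4 := by
      rw [hsum, norm_mul, hζ₀, mul_one]
      norm_num
    have hane : ‖a‖ ≠ 1 := by
      intro h'
      have hb1 : ‖b‖ = 1 := by rw [h'] at habs; linarith
      have := norm_add_le a b
      rw [hsumabs, h', hb1] at this
      linarith
    obtain ⟨w, hw0, hw1, hwinv⟩ :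
        ∃ w : ℂ, 0 < ‖w‖ ∧ ‖w‖ < 1 ∧ (w + w⁻¹) / 2 = ((2 : ℝ) : ℂ) * ζ₀ := by
      rcases lt_or_gt_of_ne hane with hlt | hgt
      · exact ⟨a, norm_pos_iff.mpr ha0, hlt, by
          rw [inv_eq_of_mul_eq_one_right hab]; push_cast; linear_combination (1/2 : ℂ) * hsum⟩
      · have hblt : ‖b‖ < 1 := by
          nlinarith [norm_nonneg b, habs, hgt]
        exact ⟨b, norm_pos_iff.mpr hb0, hblt, by
          rw [inv_eq_of_mul_eq_one_right (by linear_combination hab : b * a = 1)]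
          push_cast; linear_combination (1/2 : ℂ) * hsum⟩
    have hwA : w ∈ A := ⟨⟨hw0, hw1⟩, 2, hwinv⟩
    rcases h with h | h
    · exact ⟨w, ⟨w, hwA, by simp [h]⟩, hwA⟩
    · refine ⟨-w, ⟨w, hwA, by simp [h]⟩, ⟨?_, ?_⟩, -2, ?_⟩
      · simpa using hw0
      · simpa using hw1
      · push_cast
        rw [inv_neg]
        push_cast at hwinv
        linear_combination -hwinv
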